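/- Let φ : S^1 → R be the support function of a vector field X, let A ∈ SO_0(1,2) and σ ∈ R^{1,2}. Then the support function of the vector field A_*X + Λ(σ) is given by ψ(z) = -⟨A^{-1}(1,z), (1,0,0)⟩_{1,2} · φ(A^{-1}·z) + ⟨(1,z), σ⟩_{1,2}, where A^{-1}·z denotes the induced Möbius action of A^{-1} on S^1 (radial projection of A^{-1}(1,z)). -/
import Mathlib


/-- The Minkowski bilinear form of signature `(-,+,+)` on `ℝ³`. -/
def mink3 (x y : Fin 3 → ℝ) : ℝ := -(x 0 * y 0) + x 1 * y 1 + x 2 * y 2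

/-- Let `φ` be the support function of a vector field `X` on `S¹`, corresponding to the
1-homogeneous function `Φ` on the null cone (`φ(z) = Φ(1,z)`).  Let `A ∈ SO₀(1,2)` with
inverse `B`, and `σ ∈ ℝ^{1,2}`.  The support function of `A_*X + Λ(σ)`, namely
`ψ(z) = Φ(A⁻¹(1,z)) + ⟨(1,z), σ⟩`, is given by
`ψ(z) = -⟨A⁻¹(1,z), (1,0,0)⟩ · φ(A⁻¹·z) + ⟨(1,z), σ⟩`, where `A⁻¹·z` is the radial
projection of `A⁻¹(1,z)`. -/
theorem support_function_equivariance
    (Φ : (Fin 3 → ℝ) → ℝ)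
    (hΦ : ∀ c : ℝ, 0 < c → ∀ x : Fin 3 → ℝ, Φ (c • x) = c * Φ x)
    (φ : ℝ × ℝ → ℝ)
    (hφ : ∀ z : ℝ × ℝ, z.1 ^ 2 + z.2 ^ 2 = 1 → φ z = Φ ![1, z.1, z.2])
    (A B : Matrix (Fin 3) (Fin 3) ℝ) (hAB : A * B = 1) (hBA : B * A = 1)
    (hform : ∀ u v : Fin 3 → ℝ, mink3 (A.mulVec u) (A.mulVec v) = mink3 u v)
    (hdet : A.det = 1) (hA00 : 0 < A 0 0)
    (hpos : ∀ z : ℝ × ℝ, z.1 ^ 2 + z.2 ^ 2 = 1 → 0 < B.mulVec ![1, z.1, z.2] 0)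
    (σ : Fin 3 → ℝ)
    (ψ : ℝ × ℝ → ℝ)
    (hψ : ∀ z : ℝ × ℝ, z.1 ^ 2 + z.2 ^ 2 = 1 →
      ψ z = Φ (B.mulVec ![1, z.1, z.2]) + mink3 ![1, z.1, z.2] σ) :
    ∀ z : ℝ × ℝ, z.1 ^ 2 + z.2 ^ 2 = 1 →
      ψ z = -(mink3 (B.mulVec ![1, z.1, z.2]) ![1, 0, 0]) *
          φ (B.mulVec ![1, z.1, z.2] 1 / B.mulVec ![1, z.1, z.2] 0,
             B.mulVec ![1, z.1, z.2] 2 / B.mulVec ![1, z.1, z.2] 0)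
        + mink3 ![1, z.1, z.2] σ := by
  intro z hz
  set v : Fin 3 → ℝ := ![1, z.1, z.2] with hv
  set w : Fin 3 → ℝ := B.mulVec v with hw
  have hc : 0 < w 0 := hpos z hz
  have hABv : A.mulVec w = v := by
    rw [hw, Matrix.mulVec_mulVec, hAB, Matrix.one_mulVec]
  have hnull : mink3 w w = 0 := by
    have := hform w w
    rw [hABv] at this
    rw [← this]
    simp [mink3, hv, Matrix.cons_val_zero, Matrix.cons_val_one]
    nlinarith [hz]
  have hsq : (w 1 / w 0) ^ 2 + (w 2 / w 0) ^ 2 = 1 := by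
    have h0 : w 0 ≠ 0 := ne_of_gt hc
    field_simp
    simp only [mink3] at hnull
    nlinarith [hnull]
  have hscale : w = (w 0) • ![1, w 1 / w 0, w 2 / w 0] := by
    funext i
    fin_cases i <;>
      simp [Matrix.smul_cons, mul_div_cancel₀, ne_of_gt hc]
  have hΦw : Φ w = w 0 * φ (w 1 / w 0, w 2 / w 0) := by
    rw [hφ _ hsq]
    conv_lhs => rw [hscale]
    exact hΦ (w 0) hc _
  have hmink : -(mink3 w ![1, 0, 0]) = w 0 := by
    simp [mink3]
  rw [hψ z hz, hmink, ← hw, hΦw]
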